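/- Every simplicial tree is contractible; in particular, all reduced simplicial homology groups of a simplicial tree vanish. -/

import Mathlib

noncomputable section
attribute [local instance] Classical.propDecidable

/-- The simplicial complex generated by a set of faces: all nonempty subsets. -/
def gen {V : Type} (S : Finset (Finset V)) : Finset (Finset V) :=
  S.biUnion fun F => F.powerset.filter (· ≠ ∅)

/-- The facets (maximal faces) of a complex given by its finite set of faces. -/
def facets {V : Type} (Δ : Finset (Finset V)) : Finset (Finset V) :=
  Δ.filter fun F => ∀ G ∈ Δ, F ⊆ G → F = G

/-- A (finite, abstract) simplicial complex: nonempty faces, closed under nonempty subsets. -/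
def IsComplex {V : Type} (Δ : Finset (Finset V)) : Prop :=
  ∅ ∉ Δ ∧ ∀ F ∈ Δ, ∀ G, G ⊆ F → G ≠ ∅ → G ∈ Δ

/-- `F` is a leaf of `Δ`: `F` is a facet which is either the only facet, or
there is another facet `G` (a joint) with `F ∩ (Δ ∖ F) ⊆ G`, i.e. the
intersection of `F` with any other facet is contained in `G`. -/
def IsLeaf {V : Type} (Δ : Finset (Finset V)) (F : Finset V) : Prop :=
  F ∈ facets Δ ∧ (facets Δ = {F} ∨
    ∃ G ∈ facets Δ, G ≠ F ∧ ∀ H ∈ facets Δ, H ≠ F → F ∩ H ⊆ G)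

def HasLeaf {V : Type} (Δ : Finset (Finset V)) : Prop := ∃ F, IsLeaf Δ F

/-- A forest: every nonempty subcollection (complex generated by a subset of the
facets) has a leaf. -/
def IsForest {V : Type} (Δ : Finset (Finset V)) : Prop :=
  ∀ S ⊆ facets Δ, S.Nonempty → HasLeaf (gen S)

/-- Vertex set of a complex. -/
def vtx {V : Type} (Δ : Finset (Finset V)) : Finset V := Δ.sup id

/-- Connectedness: nonempty, and any two vertices are joined by a chain of faces. -/
def Conn {V : Type} (Δ : Finset (Finset V)) : Prop :=
  Δ.Nonempty ∧ ∀ u ∈ vtx Δ, ∀ v ∈ vtx Δ,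
    Relation.ReflTransGen (fun a b => ∃ σ ∈ Δ, a ∈ σ ∧ b ∈ σ) u v

/-- A simplicial tree is a connected forest. -/
def IsTree {V : Type} (Δ : Finset (Finset V)) : Prop := Conn Δ ∧ IsForest Δ

/-- The group of reduced simplicial `(n-1)`-chains over `ℤ`: the free `ℤ`-module on
the faces of `Δ` of cardinality `n` (with the empty face included in degree `0`). -/
abbrev RChain {V : Type} (Δ : Finset (Finset V)) (n : ℕ) :=
  {F : Finset V // (F ∈ Δ ∨ F = ∅) ∧ F.card = n} →₀ ℤ

/-- The simplicial boundary map of the (augmented) reduced chain complex of `Δ`. -/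
noncomputable def bd {V : Type} [LinearOrder V] (Δ : Finset (Finset V)) (n : ℕ) :
    RChain Δ (n + 1) →ₗ[ℤ] RChain Δ n :=
  Finsupp.lsum ℤ fun F => LinearMap.toSpanSingleton ℤ (RChain Δ n)
    (∑ x ∈ F.1.attach,
      if h : ((F.1.erase x.1 ∈ Δ ∨ F.1.erase x.1 = ∅) ∧ (F.1.erase x.1).card = n) then
        ((-1 : ℤ) ^ ((F.1.filter (· < x.1)).card)) • Finsupp.single ⟨F.1.erase x.1, h⟩ 1
      else 0)

/-- All reduced simplicial homology of `Δ` (over `ℤ`) vanishes: the augmentation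
`bd Δ 0` is surjective (vanishing of `H̃₋₁`, i.e. nonemptiness) and every cycle is a
boundary in every degree. -/
def AcyclicAll {V : Type} [LinearOrder V] (Δ : Finset (Finset V)) : Prop :=
  Function.Surjective (bd Δ 0) ∧
    ∀ n : ℕ, ∀ c : RChain Δ (n + 1), bd Δ n c = 0 → ∃ b, bd Δ (n + 1) b = c

section Chains
variable {V : Type} [LinearOrder V]

/-- sign -/
def sg (σ : Finset V) (x : V) : ℤ := (-1) ^ ((σ.filter (· < x)).card)

/-- basis element, or 0 if not a valid face of the right cardinality -/
def bsingle (Δ : Finset (Finset V)) (n : ℕ) (σ : Finset V) : RChain Δ n :=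
  if h : (σ ∈ Δ ∨ σ = ∅) ∧ σ.card = n then Finsupp.single ⟨σ, h⟩ 1 else 0

lemma bsingle_pos (Δ : Finset (Finset V)) (n : ℕ) (σ : Finset V)
    (h : (σ ∈ Δ ∨ σ = ∅) ∧ σ.card = n) : bsingle Δ n σ = Finsupp.single ⟨σ, h⟩ 1 := by
  simp [bsingle, h]

lemma single_eq_bsingle (Δ : Finset (Finset V)) (n : ℕ)
    (F : {F : Finset V // (F ∈ Δ ∨ F = ∅) ∧ F.card = n}) :
    Finsupp.single F (1:ℤ) = bsingle Δ n F.1 := by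
  rw [bsingle_pos Δ n F.1 F.2]

lemma bd_bsingle (Δ : Finset (Finset V)) (n : ℕ) (σ : Finset V)
    (h : (σ ∈ Δ ∨ σ = ∅) ∧ σ.card = n + 1) :
    bd Δ n (bsingle Δ (n+1) σ) = ∑ x ∈ σ, sg σ x • bsingle Δ n (σ.erase x) := by
  rw [bsingle_pos Δ (n+1) σ h, bd, Finsupp.lsum_single, LinearMap.toSpanSingleton_apply,
    one_smul]
  rw [← Finset.sum_attach σ (fun x => sg σ x • bsingle Δ n (σ.erase x))]
  refine Finset.sum_congr rfl (fun x _ => ?_)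
  dsimp only
  split
  · next h1 => rw [bsingle_pos Δ n _ h1]; rfl
  · next h1 =>
      have : bsingle Δ n (σ.erase x.1) = 0 := by simp only [bsingle, dif_neg h1]
      rw [this, smul_zero]

end Chains
section Maps
set_option linter.unusedSectionVars false
variable {V : Type} [LinearOrder V]

/-- cone homotopy with apex `v` on region `p` -/
def Dmap (Δ : Finset (Finset V)) (v : V) (p : Finset V → Prop) (n : ℕ) :
    RChain Δ n →ₗ[ℤ] RChain Δ (n+1) :=
  Finsupp.lsum ℤ fun F => LinearMap.toSpanSingleton ℤ (RChain Δ (n+1))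
    (if p F.1 ∧ v ∉ F.1 then sg F.1 v • bsingle Δ (n+1) (insert v F.1) else 0)

lemma Dmap_bsingle (Δ : Finset (Finset V)) (v : V) (p : Finset V → Prop) (n : ℕ)
    (σ : Finset V) (h : (σ ∈ Δ ∨ σ = ∅) ∧ σ.card = n) :
    Dmap Δ v p n (bsingle Δ n σ) =
      if p σ ∧ v ∉ σ then sg σ v • bsingle Δ (n+1) (insert v σ) else 0 := by
  rw [bsingle_pos Δ n σ h, Dmap, Finsupp.lsum_single, LinearMap.toSpanSingleton_apply, one_smul]

/-- inclusion of the chains of a subcomplex -/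
def lam (Δ' Δ : Finset (Finset V)) (n : ℕ) : RChain Δ' n →ₗ[ℤ] RChain Δ n :=
  Finsupp.lsum ℤ fun F => LinearMap.toSpanSingleton ℤ (RChain Δ n) (bsingle Δ n F.1)

/-- restriction of chains to a subcomplex -/
def rho (Δ Δ' : Finset (Finset V)) (n : ℕ) : RChain Δ n →ₗ[ℤ] RChain Δ' n :=
  Finsupp.lsum ℤ fun F => LinearMap.toSpanSingleton ℤ (RChain Δ' n) (bsingle Δ' n F.1)

lemma lam_bsingle (Δ' Δ : Finset (Finset V)) (hsub : Δ' ⊆ Δ) (n : ℕ) (σ : Finset V) :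
    lam Δ' Δ n (bsingle Δ' n σ) =
      if (σ ∈ Δ' ∨ σ = ∅) then bsingle Δ n σ else 0 := by
  by_cases h : (σ ∈ Δ' ∨ σ = ∅) ∧ σ.card = n
  · rw [bsingle_pos Δ' n σ h, lam, Finsupp.lsum_single, LinearMap.toSpanSingleton_apply,
      one_smul, if_pos h.1]
  · have h0 : bsingle Δ' n σ = 0 := by simp only [bsingle, dif_neg h]
    rw [h0, map_zero]
    split
    · next h1 =>
        have : ¬ ((σ ∈ Δ ∨ σ = ∅) ∧ σ.card = n) := by
          rcases h1 with h1 | h1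
          · exact fun hc => h ⟨Or.inl h1, hc.2⟩
          · exact fun hc => h ⟨Or.inr h1, hc.2⟩
        simp only [bsingle, dif_neg this]
    · rfl

lemma rho_bsingle (Δ Δ' : Finset (Finset V)) (hsub : Δ' ⊆ Δ) (n : ℕ) (σ : Finset V)
    (h : (σ ∈ Δ ∨ σ = ∅) ∧ σ.card = n) :
    rho Δ Δ' n (bsingle Δ n σ) = bsingle Δ' n σ := by
  rw [bsingle_pos Δ n σ h, rho, Finsupp.lsum_single, LinearMap.toSpanSingleton_apply, one_smul]

lemma rho_lam (Δ' Δ : Finset (Finset V)) (hsub : Δ' ⊆ Δ) (n : ℕ) :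
    (rho Δ Δ' n).comp (lam Δ' Δ n) = LinearMap.id := by
  refine Finsupp.lhom_ext (fun F a => ?_)
  have h1 : Finsupp.single F a = a • Finsupp.single F (1:ℤ) := by
    rw [Finsupp.smul_single, smul_eq_mul, mul_one]
  rw [h1, map_smul, map_smul, LinearMap.comp_apply, single_eq_bsingle,
    lam_bsingle Δ' Δ hsub n F.1, if_pos F.2.1,
    rho_bsingle Δ Δ' hsub n F.1 ⟨F.2.1.imp (fun h => hsub h) id, F.2.2⟩,
    ← single_eq_bsingle, LinearMap.id_apply]

lemma lam_rho_bsingle (Δ' Δ : Finset (Finset V)) (hsub : Δ' ⊆ Δ) (n : ℕ) (σ : Finset V)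
    (h : (σ ∈ Δ ∨ σ = ∅) ∧ σ.card = n) :
    lam Δ' Δ n (rho Δ Δ' n (bsingle Δ n σ)) =
      if (σ ∈ Δ' ∨ σ = ∅) then bsingle Δ n σ else 0 := by
  rw [rho_bsingle Δ Δ' hsub n σ h, lam_bsingle Δ' Δ hsub n σ]

end Maps
section Signs
set_option linter.unusedSectionVars false
variable {V : Type} [LinearOrder V]

lemma sg_mul_self (σ : Finset V) (x : V) : sg σ x * sg σ x = 1 := by
  rw [sg, ← pow_add]
  exact Even.neg_one_pow ⟨_, rfl⟩

lemma sg_insert_self (σ : Finset V) (v : V) : sg (insert v σ) v = sg σ v := by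
  unfold sg
  congr 2
  rw [Finset.filter_insert, if_neg (lt_irrefl v)]

lemma sg_erase_self (σ : Finset V) (v : V) : sg (σ.erase v) v = sg σ v := by
  unfold sg
  congr 2
  rw [Finset.filter_erase]
  exact Finset.erase_eq_of_notMem (by simp)

lemma sg_erase (σ : Finset V) (x y : V) (hx : x ∈ σ) (hxy : x ≠ y) :
    sg (σ.erase x) y = (if x < y then -1 else 1) * sg σ y := by
  unfold sg
  rw [Finset.filter_erase]
  by_cases h : x < y
  · rw [if_pos h]
    have hxf : x ∈ σ.filter (· < y) := Finset.mem_filter.2 ⟨hx, h⟩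
    have hc : (σ.filter (· < y)).card = ((σ.filter (· < y)).erase x).card + 1 := by
      rw [Finset.card_erase_of_mem hxf]
      have : 0 < (σ.filter (· < y)).card := Finset.card_pos.2 ⟨x, hxf⟩
      omega
    rw [hc, pow_succ]
    ring
  · rw [if_neg h, Finset.erase_eq_of_notMem (by simp [h]), one_mul]

lemma sg_insert (σ : Finset V) (v x : V) (hv : v ∉ σ) (hxy : x ≠ v) :
    sg (insert v σ) x = (if v < x then -1 else 1) * sg σ x := by
  unfold sg
  rw [Finset.filter_insert]
  by_cases h : v < x
  · rw [if_pos h, if_pos h, Finset.card_insert_of_notMem (by simp [hv]), pow_succ]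
    ring
  · rw [if_neg h, if_neg h, one_mul]

/-- the key cancellation for the cone homotopy -/
lemma sg_cone_cancel (σ : Finset V) (v x : V) (hv : v ∉ σ) (hx : x ∈ σ) :
    sg σ v * sg (insert v σ) x + sg σ x * sg (σ.erase x) v = 0 := by
  have hxv : x ≠ v := fun h => hv (h ▸ hx)
  rw [sg_insert σ v x hv hxv, sg_erase σ x v hx hxv]
  rcases lt_trichotomy x v with h | h | h
  · rw [if_neg (asymm h), if_pos h]; ring
  · exact absurd h hxv
  · rw [if_pos h, if_neg (asymm h)]; ring

/-- antisymmetry for `∂∂ = 0` -/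
lemma sg_bb (σ : Finset V) (x y : V) (hx : x ∈ σ) (hy : y ∈ σ) (hxy : x ≠ y) :
    sg σ x * sg (σ.erase x) y = -(sg σ y * sg (σ.erase y) x) := by
  rw [sg_erase σ x y hx hxy, sg_erase σ y x hy hxy.symm]
  rcases lt_trichotomy x y with h | h | h
  · rw [if_pos h, if_neg (asymm h)]; ring
  · exact absurd h hxy
  · rw [if_neg (asymm h), if_pos h]; ring

end Signs
section BB
set_option linter.unusedSectionVars false
variable {V : Type} [LinearOrder V]

lemma guard_subset {Δ : Finset (Finset V)} (hΔ : IsComplex Δ) {σ τ : Finset V}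
    (hσ : σ ∈ Δ) (hsub : τ ⊆ σ) : τ ∈ Δ ∨ τ = ∅ := by
  by_cases h : τ = ∅
  · exact Or.inr h
  · exact Or.inl (hΔ.2 σ hσ τ hsub h)

lemma guard_erase {Δ : Finset (Finset V)} (hΔ : IsComplex Δ) {σ : Finset V}
    (hσ : σ ∈ Δ) (x : V) : σ.erase x ∈ Δ ∨ σ.erase x = ∅ :=
  guard_subset hΔ hσ (Finset.erase_subset x σ)

lemma smul_single_one {Δ : Finset (Finset V)} {n : ℕ}
    (F : {F : Finset V // (F ∈ Δ ∨ F = ∅) ∧ F.card = n}) (a : ℤ) :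
    Finsupp.single F a = a • Finsupp.single F (1:ℤ) := by
  rw [Finsupp.smul_single, smul_eq_mul, mul_one]

lemma double_sum_antisymm {α γ : Type*} (s : Finset α) (g : α → α → (γ →₀ ℤ))
    (h : ∀ x ∈ s, ∀ y ∈ s, g x y = - g y x) :
    ∑ x ∈ s, ∑ y ∈ s, g x y = 0 := by
  have hS : (∑ x ∈ s, ∑ y ∈ s, g x y) = - ∑ x ∈ s, ∑ y ∈ s, g x y := by
    conv_lhs => rw [Finset.sum_comm]
    rw [← Finset.sum_neg_distrib]
    refine Finset.sum_congr rfl (fun y hy => ?_)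
    rw [← Finset.sum_neg_distrib]
    exact Finset.sum_congr rfl (fun x hx => h x hx y hy)
  ext a
  have h2 : (∑ x ∈ s, ∑ y ∈ s, g x y) a = - ((∑ x ∈ s, ∑ y ∈ s, g x y) a) := by
    conv_lhs => rw [hS]
    rw [Finsupp.neg_apply]
  simp only [Finsupp.coe_zero, Pi.zero_apply]
  omega

lemma bb_zero {Δ : Finset (Finset V)} (hΔ : IsComplex Δ) (n : ℕ) :
    (bd Δ n).comp (bd Δ (n+1)) = 0 := by
  refine Finsupp.lhom_ext (fun F a => ?_)
  show bd Δ n (bd Δ (n+1) (Finsupp.single F a)) = 0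
  have key : bd Δ n (bd Δ (n+1) (Finsupp.single F (1:ℤ))) = 0 := by
    have hσΔ : F.1 ∈ Δ := by
      rcases F.2.1 with h | h
      · exact h
      · exfalso; have := F.2.2; rw [h] at this; simp at this
    have hcard := F.2.2
    rw [single_eq_bsingle, bd_bsingle Δ (n+1) F.1 F.2, map_sum]
    have step : ∀ x ∈ F.1, bd Δ n (sg F.1 x • bsingle Δ (n+1) (F.1.erase x)) =
        ∑ y ∈ F.1, (if y ≠ x then (sg F.1 x * sg (F.1.erase x) y) •
          bsingle Δ n ((F.1.erase x).erase y) else 0) := by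
      intro x hx
      rw [map_smul, bd_bsingle Δ n (F.1.erase x)
        ⟨guard_erase hΔ hσΔ x, by simp [Finset.card_erase_of_mem hx, hcard]⟩, Finset.smul_sum]
      rw [← Finset.sum_erase (a := x) F.1
        (f := fun y => if y ≠ x then (sg F.1 x * sg (F.1.erase x) y) •
          bsingle Δ n ((F.1.erase x).erase y) else 0) (by simp)]
      refine Finset.sum_congr rfl (fun y hy => ?_)
      rw [if_pos (Finset.ne_of_mem_erase hy), smul_smul]
    rw [Finset.sum_congr rfl step]
    refine double_sum_antisymm F.1 _ (fun x hx y hy => ?_)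
    by_cases hxy : y = x
    · subst hxy; simp
    · simp only [if_pos hxy, if_pos (Ne.symm hxy)]
      rw [Finset.erase_right_comm, sg_bb F.1 x y hx hy (Ne.symm hxy), neg_smul]
  rw [smul_single_one, map_smul, map_smul, key, smul_zero]

lemma bb_zero' {Δ : Finset (Finset V)} (hΔ : IsComplex Δ) (n : ℕ) (c : RChain Δ (n+2)) :
    bd Δ n (bd Δ (n+1) c) = 0 := by
  have h2 := congrArg (fun f => f c) (bb_zero hΔ n)
  simpa using h2

end BB
section Key
set_option linter.unusedSectionVars false
variable {V : Type} [LinearOrder V]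
variable {Δ : Finset (Finset V)} {v : V} {p : Finset V → Prop}

lemma key1 (hΔ : IsComplex Δ)
    (hC2 : ∀ σ : Finset V, (σ ∈ Δ ∨ σ = ∅) → p σ → v ∉ σ → insert v σ ∈ Δ)
    (n : ℕ) (σ : Finset V) (hσ : σ ∈ Δ) (hc : σ.card = n+1) (hp : p σ) (hv : v ∉ σ) :
    bd Δ (n+1) (Dmap Δ v p (n+1) (bsingle Δ (n+1) σ)) +
      Dmap Δ v p n (bd Δ n (bsingle Δ (n+1) σ)) =
    bsingle Δ (n+1) σ + ∑ x ∈ σ, (if p (σ.erase x) then 0 else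
      (sg σ v * sg (insert v σ) x) • bsingle Δ (n+1) (insert v (σ.erase x))) := by
  have gσ : (σ ∈ Δ ∨ σ = ∅) ∧ σ.card = n+1 := ⟨Or.inl hσ, hc⟩
  have giv : (insert v σ ∈ Δ ∨ insert v σ = ∅) ∧ (insert v σ).card = n+1+1 :=
    ⟨Or.inl (hC2 σ (Or.inl hσ) hp hv), by rw [Finset.card_insert_of_notMem hv, hc]⟩
  have hBD : bd Δ (n+1) (Dmap Δ v p (n+1) (bsingle Δ (n+1) σ)) =
      bsingle Δ (n+1) σ + ∑ x ∈ σ,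
        (sg σ v * sg (insert v σ) x) • bsingle Δ (n+1) (insert v (σ.erase x)) := by
    rw [Dmap_bsingle Δ v p (n+1) σ gσ, if_pos ⟨hp, hv⟩, map_smul,
      bd_bsingle Δ (n+1) (insert v σ) giv, Finset.sum_insert hv, Finset.erase_insert hv,
      sg_insert_self, smul_add, smul_smul, sg_mul_self, one_smul, Finset.smul_sum]
    congr 1
    refine Finset.sum_congr rfl (fun x hx => ?_)
    rw [Finset.erase_insert_of_ne (fun h => hv (by rw [h]; exact hx)), smul_smul]
  have hDB : Dmap Δ v p n (bd Δ n (bsingle Δ (n+1) σ)) =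
      ∑ x ∈ σ, (if p (σ.erase x) then
        (sg σ x * sg (σ.erase x) v) • bsingle Δ (n+1) (insert v (σ.erase x)) else 0) := by
    rw [bd_bsingle Δ n σ gσ, map_sum]
    refine Finset.sum_congr rfl (fun x hx => ?_)
    rw [map_smul, Dmap_bsingle Δ v p n (σ.erase x)
      ⟨guard_erase hΔ hσ x, by simp [Finset.card_erase_of_mem hx, hc]⟩]
    split_ifs with h1 h2 h2
    · rw [smul_smul]
    · exact absurd h1.1 h2
    · exact absurd ⟨h2, fun hm => hv (Finset.mem_of_mem_erase hm)⟩ h1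
    · rw [smul_zero]
  rw [hBD, hDB, add_assoc, ← Finset.sum_add_distrib]
  congr 1
  refine Finset.sum_congr rfl (fun x hx => ?_)
  split_ifs with h1
  · rw [← add_smul, sg_cone_cancel σ v x hv hx, zero_smul]
  · rw [add_zero]

lemma key2 (hΔ : IsComplex Δ)
    (n : ℕ) (σ : Finset V) (hσ : σ ∈ Δ) (hc : σ.card = n+1) (hnp : ¬ p σ)
    (hC3 : ∀ x ∈ σ, ¬ p (σ.erase x)) :
    bd Δ (n+1) (Dmap Δ v p (n+1) (bsingle Δ (n+1) σ)) +
      Dmap Δ v p n (bd Δ n (bsingle Δ (n+1) σ)) = 0 := by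
  have gσ : (σ ∈ Δ ∨ σ = ∅) ∧ σ.card = n+1 := ⟨Or.inl hσ, hc⟩
  rw [Dmap_bsingle Δ v p (n+1) σ gσ, if_neg (fun h => hnp h.1), map_zero, zero_add,
    bd_bsingle Δ n σ gσ, map_sum]
  refine Finset.sum_eq_zero (fun x hx => ?_)
  rw [map_smul, Dmap_bsingle Δ v p n (σ.erase x)
    ⟨guard_erase hΔ hσ x, by simp [Finset.card_erase_of_mem hx, hc]⟩,
    if_neg (fun hh => hC3 x hx hh.1), smul_zero]

lemma key3 (hΔ : IsComplex Δ)
    (n : ℕ) (σ : Finset V) (hσ : σ ∈ Δ) (hc : σ.card = n+1) (hv : v ∈ σ) :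
    bd Δ (n+1) (Dmap Δ v p (n+1) (bsingle Δ (n+1) σ)) +
      Dmap Δ v p n (bd Δ n (bsingle Δ (n+1) σ)) =
    (if p (σ.erase v) then bsingle Δ (n+1) σ else 0) := by
  have gσ : (σ ∈ Δ ∨ σ = ∅) ∧ σ.card = n+1 := ⟨Or.inl hσ, hc⟩
  rw [Dmap_bsingle Δ v p (n+1) σ gσ, if_neg (fun h => h.2 hv), map_zero, zero_add,
    bd_bsingle Δ n σ gσ, map_sum]
  rw [Finset.sum_eq_single_of_mem v hv (fun x hx hxv => ?_)]
  · rw [map_smul, Dmap_bsingle Δ v p n (σ.erase v)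
      ⟨guard_erase hΔ hσ v, by simp [Finset.card_erase_of_mem hv, hc]⟩]
    split_ifs with h1 h2 h2
    · rw [smul_smul, Finset.insert_erase hv, sg_erase_self, sg_mul_self, one_smul]
    · exact absurd h1.1 h2
    · exact absurd ⟨h2, Finset.notMem_erase v σ⟩ h1
    · rw [smul_zero]
  · rw [map_smul, Dmap_bsingle Δ v p n (σ.erase x)
      ⟨guard_erase hΔ hσ x, by simp [Finset.card_erase_of_mem hx, hc]⟩,
      if_neg (fun hh => hh.2 (Finset.mem_erase.2 ⟨fun h => hxv h.symm, hv⟩)), smul_zero]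

end Key
section Comb
set_option linter.unusedSectionVars false
variable {V : Type}

lemma mem_gen {S : Finset (Finset V)} {σ : Finset V} :
    σ ∈ gen S ↔ (∃ F ∈ S, σ ⊆ F) ∧ σ ≠ ∅ := by
  simp only [gen, Finset.mem_biUnion, Finset.mem_filter, Finset.mem_powerset]
  constructor
  · rintro ⟨F, hF, hsub, hne⟩; exact ⟨⟨F, hF, hsub⟩, hne⟩
  · rintro ⟨⟨F, hF, hsub⟩, hne⟩; exact ⟨F, hF, hsub, hne⟩

lemma complex_gen (S : Finset (Finset V)) : IsComplex (gen S) := by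
  constructor
  · intro h; exact (mem_gen.1 h).2 rfl
  · intro F hF G hGF hG
    obtain ⟨⟨K, hK, hsub⟩, _⟩ := mem_gen.1 hF
    exact mem_gen.2 ⟨⟨K, hK, hGF.trans hsub⟩, hG⟩

lemma facets_subset {Δ : Finset (Finset V)} : facets Δ ⊆ Δ := Finset.filter_subset _ _

lemma facet_max {Δ : Finset (Finset V)} {F G : Finset V} (hF : F ∈ facets Δ)
    (hG : G ∈ Δ) (h : F ⊆ G) : F = G := ((Finset.mem_filter.1 hF).2) G hG h

lemma exists_facet {Δ : Finset (Finset V)} {σ : Finset V} (hσ : σ ∈ Δ) :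
    ∃ F ∈ facets Δ, σ ⊆ F := by
  have hne : (Δ.filter (σ ⊆ ·)).Nonempty := ⟨σ, Finset.mem_filter.2 ⟨hσ, Finset.Subset.refl σ⟩⟩
  obtain ⟨F, hF, hmax⟩ : ∃ F ∈ Δ.filter (σ ⊆ ·), ∀ G ∈ Δ.filter (σ ⊆ ·), ¬ F < G := by
    obtain ⟨F, hFm⟩ := Finset.exists_maximal hne
    exact ⟨F, hFm.1, fun G hG hlt => hlt.not_ge (hFm.2 hG hlt.le)⟩
  rw [Finset.mem_filter] at hF
  refine ⟨F, Finset.mem_filter.2 ⟨hF.1, fun G hG hFG => ?_⟩, hF.2⟩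
  by_contra hne'
  exact hmax G (Finset.mem_filter.2 ⟨hG, hF.2.trans hFG⟩) (lt_of_le_of_ne hFG hne')

lemma gen_facets {Δ : Finset (Finset V)} (hΔ : IsComplex Δ) : gen (facets Δ) = Δ := by
  ext σ
  rw [mem_gen]
  constructor
  · rintro ⟨⟨F, hF, hsub⟩, hne⟩
    exact hΔ.2 F (facets_subset hF) σ hsub hne
  · intro hσ
    refine ⟨exists_facet hσ, fun h => hΔ.1 (h ▸ hσ)⟩

lemma facets_gen {Δ S : Finset (Finset V)} (hΔ : IsComplex Δ) (hS : S ⊆ facets Δ) :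
    facets (gen S) = S := by
  ext σ
  constructor
  · intro hσ
    have hσg := facets_subset hσ
    obtain ⟨⟨K, hK, hsub⟩, hne⟩ := mem_gen.1 hσg
    have hKg : K ∈ gen S := mem_gen.2 ⟨⟨K, hK, Finset.Subset.refl K⟩,
      fun h => hΔ.1 (h ▸ facets_subset (hS hK))⟩
    rw [facet_max hσ hKg hsub]
    exact hK
  · intro hσ
    have hne : σ ≠ ∅ := fun h => hΔ.1 (h ▸ facets_subset (hS hσ))
    refine Finset.mem_filter.2 ⟨mem_gen.2 ⟨⟨σ, hσ, Finset.Subset.refl σ⟩, hne⟩, ?_⟩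
    intro G hG hsub
    obtain ⟨⟨K, hK, hsubK⟩, hneG⟩ := mem_gen.1 hG
    have h1 : σ = K := facet_max (hS hσ) (facets_subset (hS hK)) (hsub.trans hsubK)
    exact Finset.Subset.antisymm hsub (h1 ▸ hsubK)

lemma gen_subset {Δ S : Finset (Finset V)} (hΔ : IsComplex Δ) (hS : S ⊆ facets Δ) :
    gen S ⊆ Δ := by
  intro σ hσ
  obtain ⟨⟨K, hK, hsub⟩, hne⟩ := mem_gen.1 hσ
  exact hΔ.2 K (facets_subset (hS hK)) σ hsub hne

end Comb
section Contr
set_option linter.unusedSectionVars false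
variable {V : Type} [LinearOrder V]

def Contraction (Δ : Finset (Finset V)) : Prop :=
  ∃ s : ∀ n : ℕ, RChain Δ n →ₗ[ℤ] RChain Δ (n+1),
    (∀ c : RChain Δ 0, bd Δ 0 (s 0 c) = c) ∧
    (∀ n : ℕ, ∀ c : RChain Δ (n+1), bd Δ (n+1) (s (n+1) c) + s n (bd Δ n c) = c)

lemma acyclic_of_contraction {Δ : Finset (Finset V)} (h : Contraction Δ) : AcyclicAll Δ := by
  obtain ⟨s, h0, hn⟩ := h
  refine ⟨fun c => ⟨s 0 c, h0 c⟩, fun n c hc => ⟨s (n+1) c, ?_⟩⟩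
  have := hn n c
  rwa [hc, map_zero, add_zero] at this

lemma chain_ext {Δ Δ₂ : Finset (Finset V)} {n m : ℕ}
    {f g : RChain Δ n →ₗ[ℤ] RChain Δ₂ m}
    (h : ∀ σ : Finset V, (σ ∈ Δ ∨ σ = ∅) → σ.card = n →
      f (bsingle Δ n σ) = g (bsingle Δ n σ)) : f = g := by
  refine Finsupp.lhom_ext (fun F a => ?_)
  rw [smul_single_one, map_smul, map_smul, single_eq_bsingle, h F.1 F.2.1 F.2.2]

lemma sg_empty (v : V) : sg (∅ : Finset V) v = 1 := by simp [sg]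

lemma sg_singleton (v : V) : sg ({v} : Finset V) v = 1 := by
  simp [sg, Finset.filter_singleton, lt_irrefl]

lemma contraction_simplex (F : Finset V) (hne : F.Nonempty) : Contraction (gen {F}) := by
  set Δ := gen {F} with hΔdef
  have hΔ : IsComplex Δ := complex_gen _
  obtain ⟨v, hv⟩ := hne
  have hsubF : ∀ σ, σ ∈ Δ → σ ⊆ F := by
    intro σ hσ
    obtain ⟨⟨K, hK, hsub⟩, _⟩ := mem_gen.1 hσ
    rwa [Finset.mem_singleton.1 hK] at hsub
  have hmemΔ : ∀ σ : Finset V, σ ⊆ F → σ ≠ ∅ → σ ∈ Δ := by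
    intro σ hs hne'
    exact mem_gen.2 ⟨⟨F, Finset.mem_singleton_self F, hs⟩, hne'⟩
  have hC2 : ∀ σ : Finset V, (σ ∈ Δ ∨ σ = ∅) → (fun _ : Finset V => True) σ → v ∉ σ →
      insert v σ ∈ Δ := by
    intro σ hσ _ _
    rcases hσ with hσ | hσ
    · exact hmemΔ _ (Finset.insert_subset hv (hsubF σ hσ)) (Finset.insert_ne_empty v σ)
    · rw [hσ]
      exact hmemΔ _ (by simpa using hv) (Finset.insert_ne_empty v ∅)
  refine ⟨fun n => Dmap Δ v (fun _ => True) n, ?_, ?_⟩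
  · have heq : (bd Δ 0).comp (Dmap Δ v (fun _ => True) 0) = LinearMap.id := by
      refine chain_ext (fun σ hσ hc => ?_)
      have hσe : σ = ∅ := Finset.card_eq_zero.1 hc
      subst hσe
      rw [LinearMap.comp_apply, LinearMap.id_apply,
        Dmap_bsingle Δ v (fun _ => True) 0 ∅ ⟨Or.inr rfl, rfl⟩,
        if_pos ⟨trivial, Finset.notMem_empty v⟩, sg_empty, one_smul, Finset.insert_empty,
        bd_bsingle Δ 0 {v} ⟨Or.inl (hmemΔ {v} (Finset.singleton_subset_iff.2 hv)
          (Finset.singleton_ne_empty v)), Finset.card_singleton v⟩,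
        Finset.sum_singleton, sg_singleton, one_smul, Finset.erase_singleton]
    intro c
    have := congrArg (fun f => f c) heq
    simpa using this
  · intro n
    have heq : (bd Δ (n+1)).comp (Dmap Δ v (fun _ => True) (n+1)) +
        (Dmap Δ v (fun _ => True) n).comp (bd Δ n) = LinearMap.id := by
      refine chain_ext (fun σ hσ hc => ?_)
      have hσΔ : σ ∈ Δ := by
        rcases hσ with h | h
        · exact h
        · exfalso; rw [h] at hc; simp at hc
      rw [LinearMap.add_apply, LinearMap.comp_apply, LinearMap.comp_apply, LinearMap.id_apply]
      by_cases hvσ : v ∈ σ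
      · rw [key3 hΔ n σ hσΔ hc hvσ, if_pos trivial]
      · rw [key1 hΔ hC2 n σ hσΔ hc trivial hvσ]
        simp
    intro c
    have := congrArg (fun f => f c) heq
    simpa using this

end Contr
section Step
set_option linter.unusedSectionVars false
set_option maxHeartbeats 1000000
variable {V : Type} [LinearOrder V]

def Pmap (Δ : Finset (Finset V)) (v : V) (p : Finset V → Prop) :
    ∀ n : ℕ, RChain Δ n →ₗ[ℤ] RChain Δ n
  | 0 => LinearMap.id - (bd Δ 0).comp (Dmap Δ v p 0)
  | (n+1) => LinearMap.id - (bd Δ (n+1)).comp (Dmap Δ v p (n+1)) - (Dmap Δ v p n).comp (bd Δ n)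

lemma Pmap_zero_apply (Δ : Finset (Finset V)) (v : V) (p : Finset V → Prop) (c : RChain Δ 0) :
    Pmap Δ v p 0 c = c - bd Δ 0 (Dmap Δ v p 0 c) := by
  simp [Pmap, LinearMap.sub_apply, LinearMap.comp_apply]

lemma Pmap_succ_apply (Δ : Finset (Finset V)) (v : V) (p : Finset V → Prop) (n : ℕ)
    (c : RChain Δ (n+1)) :
    Pmap Δ v p (n+1) c = c - (bd Δ (n+1) (Dmap Δ v p (n+1) c) + Dmap Δ v p n (bd Δ n c)) := by
  simp only [Pmap, LinearMap.sub_apply, LinearMap.comp_apply, LinearMap.id_apply]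
  abel

lemma lam_bd {Δ' Δ : Finset (Finset V)} (hΔ' : IsComplex Δ') (hsub : Δ' ⊆ Δ) (n : ℕ) :
    (bd Δ n).comp (lam Δ' Δ (n+1)) = (lam Δ' Δ n).comp (bd Δ' n) := by
  refine chain_ext (fun σ hσ hc => ?_)
  have hσΔ' : σ ∈ Δ' := by
    rcases hσ with h | h
    · exact h
    · exfalso; rw [h] at hc; simp at hc
  rw [LinearMap.comp_apply, LinearMap.comp_apply, lam_bsingle Δ' Δ hsub (n+1) σ, if_pos hσ,
    bd_bsingle Δ n σ ⟨Or.inl (hsub hσΔ'), hc⟩, bd_bsingle Δ' n σ ⟨hσ, hc⟩, map_sum]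
  refine Finset.sum_congr rfl (fun x hx => ?_)
  rw [map_smul, lam_bsingle Δ' Δ hsub n (σ.erase x), if_pos (guard_erase hΔ' hσΔ' x)]

lemma lam_bd_apply {Δ' Δ : Finset (Finset V)} (hΔ' : IsComplex Δ') (hsub : Δ' ⊆ Δ) (n : ℕ)
    (c : RChain Δ' (n+1)) : bd Δ n (lam Δ' Δ (n+1) c) = lam Δ' Δ n (bd Δ' n c) := by
  have := congrArg (fun f => f c) (lam_bd hΔ' hsub n)
  simpa using this

lemma P_comm {Δ : Finset (Finset V)} (hΔ : IsComplex Δ) (v : V) (p : Finset V → Prop) (n : ℕ)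
    (c : RChain Δ (n+1)) :
    Pmap Δ v p n (bd Δ n c) = bd Δ n (Pmap Δ v p (n+1) c) := by
  cases n with
  | zero =>
    rw [Pmap_zero_apply, Pmap_succ_apply, map_sub, map_add, bb_zero' hΔ 0 (Dmap Δ v p 1 c)]
    abel
  | succ n =>
    rw [Pmap_succ_apply, Pmap_succ_apply, map_sub, map_add, bb_zero' hΔ n c, map_zero,
      bb_zero' hΔ (n+1) (Dmap Δ v p (n+2) c)]
    abel

lemma contraction_step {Δ : Finset (Finset V)} (hΔ : IsComplex Δ) (Fl G : Finset V)
    (hFl : Fl ∈ facets Δ) (hG : G ∈ facets Δ) (hGne : G ≠ Fl)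
    (hjoint : ∀ H ∈ facets Δ, H ≠ Fl → Fl ∩ H ⊆ G) (v : V) (hvF : v ∈ Fl) (hvG : v ∈ G)
    (hK : Contraction (gen (facets Δ \ {Fl}))) : Contraction Δ := by
  set Δ' := gen (facets Δ \ {Fl}) with hΔ'def
  set p : Finset V → Prop := fun σ => σ ∉ Δ' ∧ σ ≠ ∅ with hpdef
  have hsub : Δ' ⊆ Δ := gen_subset hΔ Finset.sdiff_subset
  have hΔ' : IsComplex Δ' := complex_gen _
  have hD : ∀ σ ∈ Δ, σ ∉ Δ' → σ ⊆ Fl := by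
    intro σ hσ hn
    obtain ⟨K, hK, hsubK⟩ := exists_facet hσ
    by_cases hKF : K = Fl
    · rwa [hKF] at hsubK
    · exact absurd (mem_gen.2 ⟨⟨K, Finset.mem_sdiff.2 ⟨hK, by simp [hKF]⟩, hsubK⟩,
        fun h => hΔ.1 (h ▸ hσ)⟩) hn
  have hE : ∀ σ : Finset V, σ ⊆ Fl → σ ∈ Δ' → σ ⊆ G := by
    intro σ hsF hσ
    obtain ⟨⟨H, hH, hsubH⟩, hne⟩ := mem_gen.1 hσ
    rw [Finset.mem_sdiff, Finset.mem_singleton] at hH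
    intro a ha
    exact hjoint H hH.1 hH.2 (Finset.mem_inter.2 ⟨hsF ha, hsubH ha⟩)
  have hFmem : ∀ τ : Finset V, τ ⊆ G → τ ≠ ∅ → τ ∈ Δ' := fun τ h hne =>
    mem_gen.2 ⟨⟨G, Finset.mem_sdiff.2 ⟨hG, by simp [hGne]⟩, h⟩, hne⟩
  have hmemΔ : ∀ τ : Finset V, τ ⊆ Fl → τ ≠ ∅ → τ ∈ Δ := fun τ h hne =>
    hΔ.2 Fl (facets_subset hFl) τ h hne
  have hC2 : ∀ σ : Finset V, (σ ∈ Δ ∨ σ = ∅) → p σ → v ∉ σ → insert v σ ∈ Δ := by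
    intro σ hσ hp hv
    rcases hσ with hσ | hσ
    · exact hmemΔ _ (Finset.insert_subset hvF (hD σ hσ hp.1)) (Finset.insert_ne_empty _ _)
    · exact absurd hσ hp.2
  have hErr : ∀ σ : Finset V, σ ⊆ Fl → ¬ p σ → insert v σ ∈ Δ' := by
    intro σ hsF hnp
    by_cases hσe : σ = ∅
    · subst hσe
      exact hFmem _ (by simpa using hvG) (Finset.insert_ne_empty _ _)
    · have hσΔ' : σ ∈ Δ' := by
        by_contra hn
        exact hnp ⟨hn, hσe⟩
      exact hFmem _ (Finset.insert_subset hvG (hE σ hsF hσΔ')) (Finset.insert_ne_empty _ _)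
  have hC3 : ∀ σ : Finset V, σ ∈ Δ' → ∀ x : V, ¬ p (σ.erase x) := by
    intro σ hσ x hp
    rcases guard_erase hΔ' hσ x with h | h
    · exact hp.1 h
    · exact hp.2 h
  obtain ⟨s', h0', hn'⟩ := hK
  -- the combined contraction
  set s : ∀ n : ℕ, RChain Δ n →ₗ[ℤ] RChain Δ (n+1) := fun n =>
    Dmap Δ v p n + (lam Δ' Δ (n+1)).comp ((s' n).comp ((rho Δ Δ' n).comp (Pmap Δ v p n)))
    with hsdef
  -- L1 : P is supported on Δ'
  have L1 : ∀ n : ℕ, ∀ c : RChain Δ n,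
      lam Δ' Δ n (rho Δ Δ' n (Pmap Δ v p n c)) = Pmap Δ v p n c := by
    intro n
    suffices h : (lam Δ' Δ n).comp ((rho Δ Δ' n).comp (Pmap Δ v p n)) = Pmap Δ v p n by
      intro c
      have := congrArg (fun f => f c) h
      simpa using this
    refine chain_ext (fun σ hσ hc => ?_)
    rw [LinearMap.comp_apply, LinearMap.comp_apply]
    cases n with
    | zero =>
      have hσe : σ = ∅ := Finset.card_eq_zero.1 hc
      subst hσe
      rw [Pmap_zero_apply, Dmap_bsingle Δ v p 0 ∅ ⟨Or.inr rfl, rfl⟩,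
        if_neg (fun h => h.1.2 rfl), map_zero, sub_zero,
        lam_rho_bsingle Δ' Δ hsub 0 ∅ ⟨Or.inr rfl, rfl⟩, if_pos (Or.inr rfl)]
    | succ n =>
      have hσΔ : σ ∈ Δ := by
        rcases hσ with h | h
        · exact h
        · exfalso; rw [h] at hc; simp at hc
      rw [Pmap_succ_apply]
      by_cases hvσ : v ∈ σ
      · rw [key3 hΔ n σ hσΔ hc hvσ]
        split_ifs with h1
        · rw [sub_self, map_zero, map_zero]
        · rw [sub_zero]
          have hσΔ' : σ ∈ Δ' := by
            by_contra hn
            have hsF : σ ⊆ Fl := hD σ hσΔ hn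
            have : insert v (σ.erase v) ∈ Δ' :=
              hErr (σ.erase v) ((Finset.erase_subset v σ).trans hsF) h1
            rw [Finset.insert_erase hvσ] at this
            exact hn this
          rw [lam_rho_bsingle Δ' Δ hsub (n+1) σ ⟨Or.inl hσΔ, hc⟩, if_pos (Or.inl hσΔ')]
      · by_cases hpσ : p σ
        · rw [key1 hΔ hC2 n σ hσΔ hc hpσ hvσ]
          rw [sub_add_cancel_left, map_neg, map_neg, map_sum, map_sum]
          congr 1
          refine Finset.sum_congr rfl (fun x hx => ?_)
          have hsF : σ ⊆ Fl := hD σ hσΔ hpσ.1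
          split_ifs with hpx
          · rw [map_zero, map_zero]
          · have hins : insert v (σ.erase x) ∈ Δ :=
              hmemΔ _ (Finset.insert_subset hvF ((Finset.erase_subset x σ).trans hsF))
                (Finset.insert_ne_empty _ _)
            have hcard : (insert v (σ.erase x)).card = n + 1 := by
              rw [Finset.card_insert_of_notMem (fun hm => hvσ (Finset.mem_of_mem_erase hm)),
                Finset.card_erase_of_mem hx, hc]
              omega
            rw [map_smul, map_smul, lam_rho_bsingle Δ' Δ hsub (n+1) _ ⟨Or.inl hins, hcard⟩,
              if_pos (Or.inl (hErr (σ.erase x) ((Finset.erase_subset x σ).trans hsF) hpx))]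
        · have hσΔ' : σ ∈ Δ' := by
            by_contra hn
            exact hpσ ⟨hn, fun h => by rw [h] at hc; simp at hc⟩
          rw [key2 hΔ n σ hσΔ hc hpσ (fun x _ => hC3 σ hσΔ' x), sub_zero,
            lam_rho_bsingle Δ' Δ hsub (n+1) σ ⟨Or.inl hσΔ, hc⟩, if_pos (Or.inl hσΔ')]
  -- rho ∘ lam = id pointwise
  have hrl : ∀ m : ℕ, ∀ z : RChain Δ' m, rho Δ Δ' m (lam Δ' Δ m z) = z := by
    intro m z
    have := congrArg (fun f => f z) (rho_lam Δ' Δ hsub m)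
    simpa using this
  -- L2 : commuting with the boundary
  have L2 : ∀ n : ℕ, ∀ c : RChain Δ (n+1),
      rho Δ Δ' n (Pmap Δ v p n (bd Δ n c)) = bd Δ' n (rho Δ Δ' (n+1) (Pmap Δ v p (n+1) c)) := by
    intro n c
    rw [P_comm hΔ v p n c, ← L1 (n+1) c,
      lam_bd_apply hΔ' hsub n (rho Δ Δ' (n+1) (Pmap Δ v p (n+1) c)), hrl, hrl]
  refine ⟨s, ?_, ?_⟩
  · -- degree 0
    intro c
    suffices h : (bd Δ 0).comp (s 0) = LinearMap.id by
      have := congrArg (fun f => f c) h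
      simpa using this
    refine chain_ext (fun σ hσ hc => ?_)
    have hσe : σ = ∅ := Finset.card_eq_zero.1 hc
    subst hσe
    rw [LinearMap.comp_apply, LinearMap.id_apply, hsdef]
    simp only [LinearMap.add_apply, LinearMap.comp_apply]
    rw [Dmap_bsingle Δ v p 0 ∅ ⟨Or.inr rfl, rfl⟩, if_neg (fun h => h.1.2 rfl), map_add, map_zero,
      zero_add]
    have hP0 : Pmap Δ v p 0 (bsingle Δ 0 ∅) = bsingle Δ 0 ∅ := by
      rw [Pmap_zero_apply, Dmap_bsingle Δ v p 0 ∅ ⟨Or.inr rfl, rfl⟩,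
        if_neg (fun h => h.1.2 rfl), map_zero, sub_zero]
    rw [hP0, rho_bsingle Δ Δ' hsub 0 ∅ ⟨Or.inr rfl, rfl⟩,
      lam_bd_apply hΔ' hsub 0 (s' 0 (bsingle Δ' 0 ∅)), h0' (bsingle Δ' 0 ∅),
      lam_bsingle Δ' Δ hsub 0 ∅, if_pos (Or.inr rfl)]
  · -- homotopy identity
    intro n c
    rw [hsdef]
    simp only [LinearMap.add_apply, LinearMap.comp_apply]
    rw [map_add]
    have hdef : bd Δ (n+1) (Dmap Δ v p (n+1) c) + Dmap Δ v p n (bd Δ n c) =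
        c - Pmap Δ v p (n+1) c := by
      rw [Pmap_succ_apply]; abel
    rw [lam_bd_apply hΔ' hsub (n+1) (s' (n+1) (rho Δ Δ' (n+1) (Pmap Δ v p (n+1) c))),
      L2 n c]
    have hcontr := hn' n (rho Δ Δ' (n+1) (Pmap Δ v p (n+1) c))
    calc bd Δ (n+1) (Dmap Δ v p (n+1) c) +
          lam Δ' Δ (n+1) (bd Δ' (n+1) (s' (n+1) (rho Δ Δ' (n+1) (Pmap Δ v p (n+1) c)))) +
          (Dmap Δ v p n (bd Δ n c) +
          lam Δ' Δ (n+1) (s' n (bd Δ' n (rho Δ Δ' (n+1) (Pmap Δ v p (n+1) c)))))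
        = (bd Δ (n+1) (Dmap Δ v p (n+1) c) + Dmap Δ v p n (bd Δ n c)) +
          lam Δ' Δ (n+1) (bd Δ' (n+1) (s' (n+1) (rho Δ Δ' (n+1) (Pmap Δ v p (n+1) c))) +
            s' n (bd Δ' n (rho Δ Δ' (n+1) (Pmap Δ v p (n+1) c)))) := by
          rw [map_add]; abel
      _ = (c - Pmap Δ v p (n+1) c) +
          lam Δ' Δ (n+1) (rho Δ Δ' (n+1) (Pmap Δ v p (n+1) c)) := by
          rw [hdef, hcontr]
      _ = c := by rw [L1 (n+1) c]; abel
end Step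
section Conn
set_option linter.unusedSectionVars false
variable {V : Type}

lemma mem_vtx {Δ : Finset (Finset V)} {a : V} : a ∈ vtx Δ ↔ ∃ σ ∈ Δ, a ∈ σ := by
  simp [vtx, Finset.mem_sup]

lemma vtx_mono {Δ' Δ : Finset (Finset V)} (h : Δ' ⊆ Δ) : vtx Δ' ⊆ vtx Δ := by
  intro a ha
  obtain ⟨σ, hσ, haσ⟩ := mem_vtx.1 ha
  exact mem_vtx.2 ⟨σ, h hσ, haσ⟩

lemma nonempty_of_mem {Δ : Finset (Finset V)} (hΔ : IsComplex Δ) {σ : Finset V} (hσ : σ ∈ Δ) :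
    σ.Nonempty := Finset.nonempty_iff_ne_empty.2 (fun h => hΔ.1 (h ▸ hσ))

lemma joint_nonempty {Δ : Finset (Finset V)} (hΔ : IsComplex Δ) (hC : Conn Δ)
    {Fl G : Finset V} (hFl : Fl ∈ facets Δ) (hG : G ∈ facets Δ) (hGne : G ≠ Fl)
    (hjoint : ∀ H ∈ facets Δ, H ≠ Fl → Fl ∩ H ⊆ G) : ∃ v, v ∈ Fl ∧ v ∈ G := by
  by_contra hcon
  push_neg at hcon
  have hdisj : ∀ H ∈ facets Δ, H ≠ Fl → ∀ a, a ∈ Fl → a ∉ H := by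
    intro H hH hHne a haF haH
    exact hcon a haF (hjoint H hH hHne (Finset.mem_inter.2 ⟨haF, haH⟩))
  obtain ⟨u, hu⟩ := nonempty_of_mem hΔ (facets_subset hFl)
  obtain ⟨w, hw⟩ := nonempty_of_mem hΔ (facets_subset hG)
  have huv : u ∈ vtx Δ := mem_vtx.2 ⟨Fl, facets_subset hFl, hu⟩
  have hwv : w ∈ vtx Δ := mem_vtx.2 ⟨G, facets_subset hG, hw⟩
  have hpath := hC.2 u huv w hwv
  have hinv : ∀ b, Relation.ReflTransGen (fun a b => ∃ σ ∈ Δ, a ∈ σ ∧ b ∈ σ) u b → b ∈ Fl := by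
    intro b hb
    induction hb with
    | refl => exact hu
    | tail hab hbc ih =>
      obtain ⟨σ, hσ, hb1, hc1⟩ := hbc
      obtain ⟨K, hK, hsubK⟩ := exists_facet hσ
      by_cases hKF : K = Fl
      · exact hKF ▸ hsubK hc1
      · exact absurd (hsubK hb1) (hdisj K hK hKF _ ih)
  exact hdisj G hG hGne w (hinv w hpath) hw

lemma conn_del {Δ : Finset (Finset V)} (hΔ : IsComplex Δ) (hC : Conn Δ)
    {Fl G : Finset V} (hFl : Fl ∈ facets Δ) (hG : G ∈ facets Δ) (hGne : G ≠ Fl)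
    (hjoint : ∀ H ∈ facets Δ, H ≠ Fl → Fl ∩ H ⊆ G) : Conn (gen (facets Δ \ {Fl})) := by
  set Δ' := gen (facets Δ \ {Fl}) with hΔ'def
  have hsub : Δ' ⊆ Δ := gen_subset hΔ Finset.sdiff_subset
  have hΔ' : IsComplex Δ' := complex_gen _
  have hGΔ' : G ∈ Δ' := mem_gen.2 ⟨⟨G, Finset.mem_sdiff.2 ⟨hG, by simp [hGne]⟩,
    Finset.Subset.refl G⟩, fun h => hΔ.1 (h ▸ facets_subset hG)⟩
  have hD : ∀ σ ∈ Δ, σ ∉ Δ' → σ ⊆ Fl := by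
    intro σ hσ hn
    obtain ⟨K, hK, hsubK⟩ := exists_facet hσ
    by_cases hKF : K = Fl
    · rwa [hKF] at hsubK
    · exact absurd (mem_gen.2 ⟨⟨K, Finset.mem_sdiff.2 ⟨hK, by simp [hKF]⟩, hsubK⟩,
        fun h => hΔ.1 (h ▸ hσ)⟩) hn
  have hE : ∀ σ : Finset V, σ ⊆ Fl → σ ∈ Δ' → σ ⊆ G := by
    intro σ hsF hσ
    obtain ⟨⟨H, hH, hsubH⟩, hne⟩ := mem_gen.1 hσ
    rw [Finset.mem_sdiff, Finset.mem_singleton] at hH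
    intro a ha
    exact hjoint H hH.1 hH.2 (Finset.mem_inter.2 ⟨hsF ha, hsubH ha⟩)
  have hvtxG : ∀ a, a ∈ vtx Δ' → a ∈ Fl → a ∈ G := by
    intro a ha haF
    obtain ⟨σ, hσ, haσ⟩ := mem_vtx.1 ha
    have h1 : ({a} : Finset V) ∈ Δ' := hΔ'.2 σ hσ {a}
      (Finset.singleton_subset_iff.2 haσ) (Finset.singleton_ne_empty a)
    exact Finset.singleton_subset_iff.1
      (hE {a} (Finset.singleton_subset_iff.2 haF) h1)
  refine ⟨⟨G, hGΔ'⟩, ?_⟩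
  intro u hu w hw
  set R' : V → V → Prop := fun a b => ∃ σ ∈ Δ', a ∈ σ ∧ b ∈ σ with hR'def
  have hpath := hC.2 u (vtx_mono hsub hu) w (vtx_mono hsub hw)
  have hRTGvtx : ∀ b, Relation.ReflTransGen R' u b → b ∈ vtx Δ' := by
    intro b hb
    induction hb with
    | refl => exact hu
    | tail hab hbc ih =>
      obtain ⟨σ, hσ, _, hc1⟩ := hbc
      exact mem_vtx.2 ⟨σ, hσ, hc1⟩
  have hQ : ∀ b, Relation.ReflTransGen (fun a b => ∃ σ ∈ Δ, a ∈ σ ∧ b ∈ σ) u b →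
      (Relation.ReflTransGen R' u b ∨ (b ∈ Fl ∧ ∃ m ∈ G, Relation.ReflTransGen R' u m)) := by
    intro b hb
    induction hb with
    | refl => exact Or.inl Relation.ReflTransGen.refl
    | tail hab hbc ih =>
      obtain ⟨σ, hσ, hb1, hc1⟩ := hbc
      by_cases hσΔ' : σ ∈ Δ'
      · rcases ih with ih | ⟨hbF, m, hmG, hm⟩
        · exact Or.inl (ih.tail ⟨σ, hσΔ', hb1, hc1⟩)
        · have hbv : _ ∈ vtx Δ' := mem_vtx.2 ⟨σ, hσΔ', hb1⟩
          have hbG : _ ∈ G := hvtxG _ hbv hbF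
          exact Or.inl (((hm.tail ⟨G, hGΔ', hmG, hbG⟩).tail ⟨σ, hσΔ', hb1, hc1⟩))
      · have hsF : σ ⊆ Fl := hD σ hσ hσΔ'
        rcases ih with ih | ⟨hbF, m, hmG, hm⟩
        · have hbv : _ ∈ vtx Δ' := hRTGvtx _ ih
          have hbG : _ ∈ G := hvtxG _ hbv (hsF hb1)
          exact Or.inr ⟨hsF hc1, _, hbG, ih⟩
        · exact Or.inr ⟨hsF hc1, m, hmG, hm⟩
  rcases hQ w hpath with h | ⟨hwF, m, hmG, hm⟩
  · exact h
  · have hwG : w ∈ G := hvtxG w hw hwF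
    exact hm.tail ⟨G, hGΔ', hmG, hwG⟩
end Conn
section Final
set_option linter.unusedSectionVars false
variable {V : Type} [LinearOrder V]

lemma contraction_of_tree : ∀ N : ℕ, ∀ Δ : Finset (Finset V), (facets Δ).card ≤ N →
    IsComplex Δ → IsTree Δ → Contraction Δ := by
  intro N
  induction N with
  | zero =>
    intro Δ hcard hΔ hT
    exfalso
    obtain ⟨σ, hσ⟩ := hT.1.1
    obtain ⟨K, hK, _⟩ := exists_facet hσ
    have := Finset.card_pos.2 ⟨K, hK⟩
    omega
  | succ N ih =>
    intro Δ hcard hΔ hT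
    obtain ⟨σ0, hσ0⟩ := hT.1.1
    have hfne : (facets Δ).Nonempty := by
      obtain ⟨K, hK, _⟩ := exists_facet hσ0
      exact ⟨K, hK⟩
    obtain ⟨Fl, hleaf⟩ := hT.2 (facets Δ) (Finset.Subset.refl _) hfne
    rw [gen_facets hΔ] at hleaf
    obtain ⟨hFl, hor⟩ := hleaf
    by_cases hsingle : facets Δ = {Fl}
    · have hΔeq : Δ = gen {Fl} := by rw [← gen_facets hΔ, hsingle]
      rw [hΔeq]
      exact contraction_simplex Fl (nonempty_of_mem hΔ (facets_subset hFl))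
    · rcases hor with h | ⟨G, hG, hGne, hjoint⟩
      · exact absurd h hsingle
      · obtain ⟨v, hvF, hvG⟩ := joint_nonempty hΔ hT.1 hFl hG hGne hjoint
        refine contraction_step hΔ Fl G hFl hG hGne hjoint v hvF hvG (ih _ ?_ ?_ ?_)
        · rw [facets_gen hΔ Finset.sdiff_subset]
          have h1 : facets Δ \ {Fl} = (facets Δ).erase Fl := by
            rw [Finset.sdiff_singleton_eq_erase]
          rw [h1, Finset.card_erase_of_mem hFl]
          omega
        · exact complex_gen _
        · refine ⟨conn_del hΔ hT.1 hFl hG hGne hjoint, ?_⟩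
          intro S hS hSne
          refine hT.2 S ?_ hSne
          rw [facets_gen hΔ Finset.sdiff_subset] at hS
          exact hS.trans Finset.sdiff_subset

end Final

/-- Every simplicial tree is contractible; in particular all of its
reduced simplicial homology groups (here over `ℤ`) vanish: the augmentation map is
surjective and in every degree every cycle is a boundary. -/
theorem tree_acyclic {V : Type} [LinearOrder V] (Δ : Finset (Finset V))
    (hΔ : IsComplex Δ) (hT : IsTree Δ) : AcyclicAll Δ := by
  exact acyclic_of_contraction (contraction_of_tree (facets Δ).card Δ le_rfl hΔ hT)
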